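/- Let Φ = {φ_n}_{n=1}^N ⊆ ℂ² with N < 4. Then the map A : ℂ²/𝕋 → ℝ^N defined by (A(x))(n) = |⟨x,φ_n⟩|² is not injective modulo the unit circle. -/

import Mathlib

open Complex
noncomputable section

private def g' (a : ℂ) (φ : EuclideanSpace ℂ (Fin 2)) : EuclideanSpace ℂ (Fin 2) →ₗ[ℝ] ℝ where
  toFun v := (a * (inner ℂ φ v : ℂ)).re
  map_add' x y := by simp [inner_add_right, mul_add]
  map_smul' r v := by
    have h : (r : ℝ) • v = (r : ℂ) • v := (RCLike.real_smul_eq_coe_smul (K := ℂ) r v)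
    simp only [h, inner_smul_right]
    simp [Complex.mul_re]
    ring

private lemma key_norm' (A B : ℂ) (h : (A * (starRingEnd ℂ) B).re = 0) :
    ‖A + B‖ ^ 2 = ‖A - B‖ ^ 2 := by
  have h' : A.re * B.re + A.im * B.im = 0 := by
    simpa [Complex.mul_re] using h
  simp only [Complex.sq_norm, Complex.normSq_apply,
    Complex.add_re, Complex.add_im, Complex.sub_re, Complex.sub_im]
  nlinarith [h']

private lemma exists_ker' (a b : ℂ) (φ0 φ1 u : EuclideanSpace ℂ (Fin 2)) :
    ∃ v : EuclideanSpace ℂ (Fin 2),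
      (g' a φ0) v = 0 ∧ (g' b φ1) v = 0 ∧ v ∉ Submodule.span ℝ {Complex.I • u} := by
  haveI : FiniteDimensional ℝ (EuclideanSpace ℂ (Fin 2)) :=
    FiniteDimensional.trans ℝ ℂ _
  set L : EuclideanSpace ℂ (Fin 2) →ₗ[ℝ] ℝ × ℝ := (g' a φ0).prod (g' b φ1) with hL
  have hrank : Module.finrank ℝ (EuclideanSpace ℂ (Fin 2)) = 4 := by
    have := Module.finrank_mul_finrank ℝ ℂ (EuclideanSpace ℂ (Fin 2))
    simp [Complex.finrank_real_complex, finrank_euclideanSpace_fin] at this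
    omega
  have hker : 2 ≤ Module.finrank ℝ (LinearMap.ker L) := by
    have h1 := LinearMap.finrank_range_add_finrank_ker L
    have h2 : Module.finrank ℝ (LinearMap.range L) ≤ 2 := by
      have := Submodule.finrank_le (LinearMap.range L)
      simpa using this
    omega
  have hspan : Module.finrank ℝ (Submodule.span ℝ {Complex.I • u}) ≤ 1 := by
    by_cases h : Complex.I • u = 0
    · rw [h, Submodule.span_zero_singleton]; simp
    · rw [finrank_span_singleton h]
  by_contra hcon
  push_neg at hcon
  have hle : LinearMap.ker L ≤ Submodule.span ℝ {Complex.I • u} := by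
    intro v hv
    rw [LinearMap.mem_ker, hL, LinearMap.prod_apply] at hv
    have h0 : (g' a φ0) v = 0 := congrArg Prod.fst hv
    have h1 : (g' b φ1) v = 0 := congrArg Prod.snd hv
    by_contra hns
    exact hns (hcon v h0 h1)
  have := Submodule.finrank_mono hle
  omega

private lemma inner_two' (x y : EuclideanSpace ℂ (Fin 2)) :
    (inner ℂ x y : ℂ) = (starRingEnd ℂ) (x 0) * y 0 + (starRingEnd ℂ) (x 1) * y 1 := by
  simp [PiLp.inner_apply, RCLike.inner_apply, Fin.sum_univ_two, mul_comm]

theorem stmt_10 (N : ℕ) (hN : N < 4) (Φ : Fin N → EuclideanSpace ℂ (Fin 2)) :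
    ¬ ∀ x y : EuclideanSpace ℂ (Fin 2),
        (∀ n, ‖(inner ℂ x (Φ n) : ℂ)‖ ^ 2 = ‖(inner ℂ y (Φ n) : ℂ)‖ ^ 2) →
        ∃ c : ℂ, ‖c‖ = 1 ∧ y = c • x := by
  classical
  intro h
  -- padded frame vectors
  set φd : ℕ → EuclideanSpace ℂ (Fin 2) :=
    fun k => if h : k < N then Φ ⟨k, h⟩ else 0 with hφd
  set ψ : EuclideanSpace ℂ (Fin 2) := φd 2 with hψ
  -- choose u ≠ 0 orthogonal to ψ
  set u : EuclideanSpace ℂ (Fin 2) :=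
    if ψ = 0 then (WithLp.equiv 2 (Fin 2 → ℂ)).symm ![1, 0]
    else (WithLp.equiv 2 (Fin 2 → ℂ)).symm ![(starRingEnd ℂ) (ψ 1), -(starRingEnd ℂ) (ψ 0)] with hu
  have hu0 : u ≠ 0 := by
    rw [hu]
    split_ifs with hz
    · intro hcon
      have : ((WithLp.equiv 2 (Fin 2 → ℂ)).symm ![1, 0] : EuclideanSpace ℂ (Fin 2)) 0 = 0 := by
        rw [hcon]; rfl
      simp [WithLp.equiv_symm_apply, PiLp.toLp_apply] at this
    · intro hcon
      apply hz
      have h0 : ((WithLp.equiv 2 (Fin 2 → ℂ)).symm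
          ![(starRingEnd ℂ) (ψ 1), -(starRingEnd ℂ) (ψ 0)] : EuclideanSpace ℂ (Fin 2)) 0 = 0 := by
        rw [hcon]; rfl
      have h1 : ((WithLp.equiv 2 (Fin 2 → ℂ)).symm
          ![(starRingEnd ℂ) (ψ 1), -(starRingEnd ℂ) (ψ 0)] : EuclideanSpace ℂ (Fin 2)) 1 = 0 := by
        rw [hcon]; rfl
      simp [WithLp.equiv_symm_apply, PiLp.toLp_apply] at h0 h1
      ext i
      fin_cases i <;> simp [h0, h1]
  have huψ : (inner ℂ u ψ : ℂ) = 0 := by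
    rw [hu]
    split_ifs with hz
    · rw [hz, inner_zero_right]
    · rw [inner_two']
      simp [WithLp.equiv_symm_apply, PiLp.toLp_apply]
      ring
  -- kernel vector
  obtain ⟨v, hv0, hv1, hvspan⟩ :=
    exists_ker' (inner ℂ u (φd 0)) (inner ℂ u (φd 1)) (φd 0) (φd 1) u
  -- measurements agree for x = u + v, y = u - v
  have hmeas : ∀ n : Fin N, ‖(inner ℂ (u + v) (Φ n) : ℂ)‖ ^ 2 = ‖(inner ℂ (u - v) (Φ n) : ℂ)‖ ^ 2 := by
    intro n
    have hΦn : Φ n = φd n.val := by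
      rw [hφd]; simp [n.isLt]
    have hre : ((inner ℂ u (Φ n) : ℂ) * (starRingEnd ℂ) (inner ℂ v (Φ n) : ℂ)).re = 0 := by
      rw [inner_conj_symm]
      have hcase : (n : ℕ) = 0 ∨ (n : ℕ) = 1 ∨ (n : ℕ) = 2 := by omega
      rcases hcase with hc | hc | hc
      · rw [hΦn, hc]; exact hv0
      · rw [hΦn, hc]; exact hv1
      · rw [hΦn, hc, ← hψ, huψ, zero_mul]; rfl
    rw [inner_add_left, inner_sub_left]
    exact key_norm' _ _ hre
  obtain ⟨c, hc, hxy⟩ := h (u + v) (u - v) hmeas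
  -- derive (1+c) • v = (1-c) • u
  have h2 : v + c • v - (u - c • u) = 0 := by
    have h3 : u - v - (c • u + c • v) = 0 := by
      rw [← smul_add]; rw [sub_eq_zero]; exact hxy
    calc v + c • v - (u - c • u) = -(u - v - (c • u + c • v)) := by abel
    _ = 0 := by rw [h3, neg_zero]
  have h4 : (1 + c) • v = (1 - c) • u := by
    rw [add_smul, sub_smul, one_smul, one_smul, ← sub_eq_zero]
    exact h2
  by_cases h1c : 1 + c = 0
  · -- c = -1 : then 2 • u = 0, contradiction
    have hcm : c = -1 := by linear_combination h1c
    rw [h1c, zero_smul, hcm] at h4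
    have : ((2 : ℂ)) • u = 0 := by
      rw [show (2:ℂ) = 1 - (-1) by ring]; exact h4.symm
    rw [smul_eq_zero] at this
    rcases this with h | h
    · norm_num at h
    · exact hu0 h
  · -- v = ((1-c)/(1+c)) • u which lies in ℝ (I • u)
    set w : ℂ := (1 - c) / (1 + c) with hw
    have hv : v = w • u := by
      have := congrArg (fun z => (1 + c)⁻¹ • z) h4
      simp only [smul_smul, inv_mul_cancel₀ h1c, one_smul] at this
      rw [this, hw, div_eq_inv_mul]
    have hnsq : c.re * c.re + c.im * c.im = 1 := by
      have : Complex.normSq c = 1 := by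
        rw [Complex.normSq_eq_norm_sq, hc]; norm_num
      simpa [Complex.normSq_apply] using this
    have hwre : w.re = 0 := by
      rw [hw, Complex.div_re]
      rw [← add_div, div_eq_zero_iff]
      left
      simp [Complex.sub_re, Complex.sub_im, Complex.add_re, Complex.add_im]
      nlinarith [hnsq]
    have hwI : w = (w.im : ℂ) * Complex.I := by
      apply Complex.ext <;> simp [hwre, Complex.mul_re, Complex.mul_im]
    apply hvspan
    rw [Submodule.mem_span_singleton]
    refine ⟨w.im, ?_⟩
    rw [hv, hwI, mul_smul]
    rw [RCLike.real_smul_eq_coe_smul (K := ℂ)]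
    simp [Complex.mul_im]
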